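/- For any lists p and y* over a type α with decidable equality and any token a : α, the minimum of D(p ++ (a :: s), y*) over all lists s is at most m(p, y*) + 1, where m(p, y*) = min over 0 ≤ j ≤ |y*| of D(p, y*_{<j}); i.e., extending the prefix p by any single token increases the best achievable edit distance to y* by at most 1. -/

import Mathlib

namespace Levenshtein

/-- Costs of the edit operations (as in the former `Mathlib.Data.List.EditDistance.Defs`). -/
structure Cost (α β δ : Type*) where
  delete : α → δ
  insert : β → δ
  substitute : α → β → δ

/-- Unit costs; substitution of equal letters is free. -/
def defaultCost {α : Type*} [DecidableEq α] : Cost α α ℕ where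
  delete _ := 1
  insert _ := 1
  substitute a b := if a = b then 0 else 1

/-- One step of the dynamic program. -/
def impl {α β δ : Type*} [AddZeroClass δ] [Min δ] (C : Cost α β δ) (xs : List α) (y : β)
    (d : {r : List δ // 0 < r.length}) : {r : List δ // 0 < r.length} :=
  let ⟨ds, w⟩ := d
  xs.zip (ds.zip ds.tail) |>.foldr
    (init := ⟨[ds.getLast (List.length_pos_iff.mp w) + C.insert y], by simp⟩)
    (fun ⟨x, d₀, d₁⟩ ⟨r, w⟩ =>
      ⟨min (C.delete x + r[0]) (min (C.insert y + d₀) (C.substitute x y + d₁)) :: r, by simp⟩)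

end Levenshtein

open Levenshtein in
/-- Edit distances from all suffixes of `xs` to `ys`. -/
def suffixLevenshtein {α β δ : Type*} [AddZeroClass δ] [Min δ] (C : Cost α β δ)
    (xs : List α) (ys : List β) : {r : List δ // 0 < r.length} :=
  ys.foldr
    (impl C xs)
    (xs.foldr (init := ⟨[0], by simp⟩) (fun a ⟨r, w⟩ => ⟨(C.delete a + r[0]) :: r, by simp⟩))

open Levenshtein in
/-- The (weighted) Levenshtein distance, as formerly defined in Mathlib. -/
def levenshtein {α β δ : Type*} [AddZeroClass δ] [Min δ] (C : Cost α β δ)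
    (xs : List α) (ys : List β) : δ :=
  let ⟨r, w⟩ := suffixLevenshtein C xs ys
  r[0]

/-- Unit-cost Levenshtein edit distance between two lists. -/
def editDist {α : Type*} [DecidableEq α] (u v : List α) : ℕ :=
  levenshtein Levenshtein.defaultCost u v

/-- `rowMin p y = min over 0 ≤ j ≤ |y|` of the edit distance between `p` and `y.take j`. -/
def rowMin {α : Type*} [DecidableEq α] (p y : List α) : ℕ :=
  (Finset.range (y.length + 1)).inf' (by simp) (fun j => editDist p (y.take j))

open Levenshtein in
theorem impl_cons' {α β δ : Type*} [AddZeroClass δ] [Min δ] (C : Cost α β δ) (x : α) (xs : List α) (y : β)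
    (d : δ) (ds : List δ) (w) (w' : 0 < List.length ds) :
    impl C (x :: xs) y ⟨d :: ds, w⟩ =
      let ⟨r, w⟩ := impl C xs y ⟨ds, w'⟩
      ⟨min (C.delete x + r[0]) (min (C.insert y + d) (C.substitute x y + ds[0])) :: r, by simp⟩ :=
  match ds, w' with | _ :: _, _ => rfl

open Levenshtein in
theorem impl_length' {α β δ : Type*} [AddZeroClass δ] [Min δ] (C : Cost α β δ) (xs : List α) (y : β)
    (d : {r : List δ // 0 < r.length}) (w : d.1.length = xs.length + 1) :
    (impl C xs y d).1.length = xs.length + 1 := by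
  induction xs generalizing d with
  | nil => rfl
  | cons x xs ih =>
    match d, w with
    | ⟨d₁ :: d₂ :: ds, _⟩, w =>
      rw [impl_cons' C x xs y d₁ (d₂ :: ds) _ (by simp)]
      simp only [List.length_cons]
      congr 1
      exact ih ⟨d₂ :: ds, (by simp)⟩ (by simpa using w)

open Levenshtein in
theorem suffixLevenshtein_length' {α β δ : Type*} [AddZeroClass δ] [Min δ] (C : Cost α β δ)
    (xs : List α) (ys : List β) :
    (suffixLevenshtein C xs ys).1.length = xs.length + 1 := by
  induction ys with
  | nil =>
    dsimp [suffixLevenshtein]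
    induction xs with
    | nil => rfl
    | cons _ xs ih => simp_all
  | cons y ys ih =>
    show (impl C xs y (suffixLevenshtein C xs ys)).1.length = _
    rw [impl_length']
    exact ih

open Levenshtein in
theorem suffixLevenshtein_cons₁' {α β δ : Type*} [AddZeroClass δ] [Min δ] (C : Cost α β δ)
    (x : α) (xs : List α) (ys : List β) :
    suffixLevenshtein C (x :: xs) ys =
      ⟨levenshtein C (x :: xs) ys :: (suffixLevenshtein C xs ys).1, by simp⟩ := by
  induction ys with
  | nil => rfl
  | cons y ys ih =>
    show impl C (x :: xs) y (suffixLevenshtein C (x :: xs) ys) = _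
    rw [ih]
    have hl := suffixLevenshtein_length' C xs ys
    have hl1 := suffixLevenshtein_length' C (x :: xs) ys
    have e : levenshtein C (x :: xs) (y :: ys) = (impl C (x :: xs) y (suffixLevenshtein C (x :: xs) ys)).1[0]'(impl C (x :: xs) y (suffixLevenshtein C (x :: xs) ys)).2 := rfl
    rw [e, ih]
    have e3 : suffixLevenshtein C xs (y :: ys) = impl C xs y (suffixLevenshtein C xs ys) := rfl
    rw [e3]
    generalize suffixLevenshtein C xs ys = s at hl ⊢
    obtain ⟨l, hlw⟩ := s
    rw [impl_cons' C x xs y _ l _ (by simp at hl ⊢; omega)]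
    generalize impl C xs y ⟨l, _⟩ = t
    obtain ⟨r, w⟩ := t
    rfl

open Levenshtein in
theorem levenshtein_cons_cons {α β δ : Type*} [AddZeroClass δ] [Min δ] (C : Cost α β δ)
    (x : α) (xs : List α) (y : β) (ys : List β) :
    levenshtein C (x :: xs) (y :: ys) =
      min (C.delete x + levenshtein C xs (y :: ys))
        (min (C.insert y + levenshtein C (x :: xs) ys)
          (C.substitute x y + levenshtein C xs ys)) := by
  have hl := suffixLevenshtein_length' C xs ys
  show (Levenshtein.impl C (x :: xs) y (suffixLevenshtein C (x :: xs) ys)).1[0]'(Levenshtein.impl C (x :: xs) y (suffixLevenshtein C (x :: xs) ys)).2 = _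
  rw [suffixLevenshtein_cons₁']
  have e : levenshtein C xs (y :: ys) = (Levenshtein.impl C xs y (suffixLevenshtein C xs ys)).1[0]'(Levenshtein.impl C xs y (suffixLevenshtein C xs ys)).2 := rfl
  have e2 : levenshtein C xs ys = (suffixLevenshtein C xs ys).1[0]'(suffixLevenshtein C xs ys).2 := rfl
  rw [e, e2]
  generalize levenshtein C (x :: xs) ys = d
  generalize suffixLevenshtein C xs ys = s at hl ⊢
  obtain ⟨l, hlw⟩ := s
  rw [impl_cons' C x xs y _ l _ (by simp at hl ⊢; omega)]
  match l, hlw with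
  | _ :: _, _ => rfl

theorem levenshtein_nil_nil {α β δ : Type*} [AddZeroClass δ] [Min δ] (C : Levenshtein.Cost α β δ) :
    levenshtein C [] [] = 0 := rfl

theorem levenshtein_cons_nil {α β δ : Type*} [AddZeroClass δ] [Min δ] (C : Levenshtein.Cost α β δ)
    (x : α) (xs : List α) :
    levenshtein C (x :: xs) [] = C.delete x + levenshtein C xs [] := rfl

theorem levenshtein_nil_cons {α β δ : Type*} [AddCommMonoid δ] [Min δ] (C : Levenshtein.Cost α β δ)
    (y : β) (ys : List β) :
    levenshtein C [] (y :: ys) = C.insert y + levenshtein C [] ys := by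
  have hl := suffixLevenshtein_length' C ([] : List α) ys
  show (Levenshtein.impl C [] y (suffixLevenshtein C [] ys)).1[0]'(Levenshtein.impl C [] y (suffixLevenshtein C [] ys)).2 = C.insert y + (suffixLevenshtein C [] ys).1[0]'(suffixLevenshtein C [] ys).2
  generalize suffixLevenshtein C ([] : List α) ys = s at hl ⊢
  obtain ⟨l, hlw⟩ := s
  simp at hl
  match l, hl with
  | [a], _ => simp [Levenshtein.impl, add_comm]

@[simp] theorem defaultCost_delete' {α : Type*} [DecidableEq α] (a : α) :
    (Levenshtein.defaultCost (α := α)).delete a = 1 := rfl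

@[simp] theorem defaultCost_insert' {α : Type*} [DecidableEq α] (a : α) :
    (Levenshtein.defaultCost (α := α)).insert a = 1 := rfl

@[simp] theorem defaultCost_substitute' {α : Type*} [DecidableEq α] (a b : α) :
    (Levenshtein.defaultCost (α := α)).substitute a b = if a = b then 0 else 1 := rfl

lemma editDist_self {α : Type*} [DecidableEq α] (u : List α) : editDist u u = 0 := by
  induction u with
  | nil => rfl
  | cons x xs ih =>
    have h : editDist (x :: xs) (x :: xs) ≤ 0 := by
      unfold editDist at *
      rw [levenshtein_cons_cons]
      calc _ ≤ Levenshtein.defaultCost.substitute x x +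
          levenshtein Levenshtein.defaultCost xs xs :=
            le_trans (min_le_right _ _) (min_le_right _ _)
        _ = 0 := by simp [ih]
    omega

lemma editDist_le_insert {α : Type*} [DecidableEq α] (u v : List α) (y : α) :
    editDist u (y :: v) ≤ 1 + editDist u v := by
  cases u with
  | nil => simp [editDist, levenshtein_nil_cons]
  | cons x xs =>
    unfold editDist
    rw [levenshtein_cons_cons]
    exact le_trans (min_le_right _ _) (min_le_left _ _)

lemma editDist_le_delete {α : Type*} [DecidableEq α] (u v : List α) (x : α) :
    editDist (x :: u) v ≤ 1 + editDist u v := by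
  cases v with
  | nil => simp [editDist, levenshtein_cons_nil]
  | cons y ys =>
    unfold editDist
    rw [levenshtein_cons_cons]
    exact min_le_left _ _

lemma editDist_append_le {α : Type*} [DecidableEq α] (u₁ v₁ u₂ v₂ : List α) :
    editDist (u₁ ++ u₂) (v₁ ++ v₂) ≤ editDist u₁ v₁ + editDist u₂ v₂ := by
  induction u₁ generalizing v₁ with
  | nil =>
    induction v₁ with
    | nil => simp [editDist, levenshtein_nil_nil]
    | cons y ys ih =>
      calc editDist ([] ++ u₂) ((y :: ys) ++ v₂) ≤ 1 + editDist ([] ++ u₂) (ys ++ v₂) :=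
            editDist_le_insert _ _ _
        _ ≤ 1 + (editDist [] ys + editDist u₂ v₂) := by omega
        _ = (1 + editDist [] ys) + editDist u₂ v₂ := by omega
        _ ≤ editDist [] (y :: ys) + editDist u₂ v₂ := by
            simp [editDist, levenshtein_nil_cons]
  | cons x xs ihx =>
    induction v₁ with
    | nil =>
      calc editDist ((x :: xs) ++ u₂) ([] ++ v₂) ≤ 1 + editDist (xs ++ u₂) ([] ++ v₂) :=
            editDist_le_delete _ _ _
        _ ≤ 1 + (editDist xs [] + editDist u₂ v₂) := by have := ihx []; omega
        _ = (1 + editDist xs []) + editDist u₂ v₂ := by omega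
        _ ≤ editDist (x :: xs) [] + editDist u₂ v₂ := by
            simp [editDist, levenshtein_cons_nil]
    | cons y ys ihy =>
      have h1 : editDist ((x :: xs) ++ u₂) ((y :: ys) ++ v₂) ≤
          1 + editDist (xs ++ u₂) ((y :: ys) ++ v₂) := editDist_le_delete _ _ _
      have h2 : editDist ((x :: xs) ++ u₂) ((y :: ys) ++ v₂) ≤
          1 + editDist ((x :: xs) ++ u₂) (ys ++ v₂) := editDist_le_insert _ _ _
      have h3 : editDist ((x :: xs) ++ u₂) ((y :: ys) ++ v₂) ≤
          (Levenshtein.defaultCost.substitute x y) + editDist (xs ++ u₂) (ys ++ v₂) := by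
        show levenshtein _ (x :: (xs ++ u₂)) (y :: (ys ++ v₂)) ≤ _
        rw [levenshtein_cons_cons]
        exact le_trans (min_le_right _ _) (min_le_right _ _)
      have i1 := ihx (y :: ys)
      have i3 := ihx ys
      have hr : editDist (x :: xs) (y :: ys) =
          min (1 + editDist xs (y :: ys))
            (min (1 + editDist (x :: xs) ys)
              ((Levenshtein.defaultCost.substitute x y) + editDist xs ys)) := by
        simp [editDist, levenshtein_cons_cons]
      rw [hr]
      omega

theorem sInf_extension_le_rowMin_add_one {α : Type*} [DecidableEq α]
    (p ystar : List α) (a : α) :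
    sInf {d | ∃ s : List α, d = editDist (p ++ a :: s) ystar} ≤ rowMin p ystar + 1 := by
  obtain ⟨j, hj, hje⟩ := Finset.exists_mem_eq_inf' (show (Finset.range (ystar.length + 1)).Nonempty by simp)
    (fun j => editDist p (ystar.take j))
  have hmem : editDist (p ++ a :: ystar.drop j) ystar ∈
      {d | ∃ s : List α, d = editDist (p ++ a :: s) ystar} := ⟨ystar.drop j, rfl⟩
  refine le_trans (Nat.sInf_le hmem) ?_
  have hsplit : ystar = ystar.take j ++ ystar.drop j := (List.take_append_drop j ystar).symm
  have h1 : editDist (p ++ a :: ystar.drop j) (ystar.take j ++ ystar.drop j) ≤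
      editDist p (ystar.take j) + editDist (a :: ystar.drop j) (ystar.drop j) :=
    editDist_append_le p (ystar.take j) (a :: ystar.drop j) (ystar.drop j)
  rw [List.take_append_drop] at h1
  have h2 : editDist (a :: ystar.drop j) (ystar.drop j) ≤ 1 + editDist (ystar.drop j) (ystar.drop j) :=
    editDist_le_delete _ _ _
  have h3 := editDist_self (ystar.drop j)
  have : rowMin p ystar = editDist p (ystar.take j) := hje
  omega
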